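/- arXiv:1907.02553 — 6 statements merged into one kernel-verified Lean document; each statement's English description precedes it below -/
import Mathlib

section
/- Hake's theorem for the Newton integral: for a, b ∈ ℝ ∪ {±∞} with a < b and f : (a,b) → ℝ, the Newton integral of f over (a,b) exists if and only if for every c ∈ (a,b) the Newton integral over (a,c) exists and lim_{c→b⁻} ∫ₐᶜ f exists finitely; in that case ∫ₐᵇ f = lim_{c→b⁻} ∫ₐᶜ f. -/
open Filter Set Topology

noncomputable section

/-- The open interval of reals with extended-real endpoints. -/
def eIoo (a b : EReal) : Set ℝ := {x : ℝ | a < (x : EReal) ∧ (x : EReal) < b}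

/-- The filter of approach to the endpoint `c` from within the interval `(a,b)`. -/
def endFilter (c a b : EReal) : Filter ℝ :=
  (nhds c).comap (fun x : ℝ => (x : EReal)) ⊓ Filter.principal (eIoo a b)

/-- `f` has Newton integral `v` over `(a,b)`: some primitive `F` of `f` on `(a,b)` has
finite one-sided limits `La` at `a⁺` and `Lb` at `b⁻`, and `v = Lb - La`. -/
def HasNewton (f : ℝ → ℝ) (a b : EReal) (v : ℝ) : Prop :=
  ∃ (F : ℝ → ℝ) (La Lb : ℝ),
    (∀ x ∈ eIoo a b, HasDerivAt F (f x) x) ∧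
    Filter.Tendsto F (endFilter a a b) (nhds La) ∧
    Filter.Tendsto F (endFilter b a b) (nhds Lb) ∧
    v = Lb - La

namespace HakeAux

lemma eIoo_subset {a b c : EReal} (h : c ≤ b) : eIoo a c ⊆ eIoo a b :=
  fun _ hx => ⟨hx.1, lt_of_lt_of_le hx.2 h⟩

lemma endFilter_mono {e a b c : EReal} (h : c ≤ b) : endFilter e a c ≤ endFilter e a b :=
  inf_le_inf_left _ (principal_mono.2 (eIoo_subset h))

lemma comap_coe_nhds (c : ℝ) : (𝓝 (c : EReal)).comap (fun x : ℝ => (x : EReal)) = 𝓝 c := by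
  rw [EReal.nhds_coe, Filter.comap_map EReal.coe_injective]

lemma endFilter_coe_le_nhds (c : ℝ) (a b : EReal) : endFilter (c : EReal) a b ≤ 𝓝 c := by
  rw [endFilter, comap_coe_nhds]; exact inf_le_left

lemma isOpen_eIoo (a b : EReal) : IsOpen (eIoo a b) := by
  have : eIoo a b = ((fun x : ℝ => (x : EReal)) ⁻¹' Ioi a) ∩
      ((fun x : ℝ => (x : EReal)) ⁻¹' Iio b) := rfl
  rw [this]
  exact ((isOpen_Ioi).preimage continuous_coe_real_ereal).inter
    ((isOpen_Iio).preimage continuous_coe_real_ereal)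

lemma endFilter_right_neBot {a b : EReal} (hab : a < b) : (endFilter b a b).NeBot := by
  obtain ⟨x₀, hx₀a, hx₀b⟩ := EReal.lt_iff_exists_real_btwn.1 hab
  induction b with
  | bot => exact absurd hab (by simp)
  | coe r =>
    have hx₀r : x₀ < r := EReal.coe_lt_coe_iff.1 hx₀b
    have hne : (𝓝[Ioo x₀ r] r).NeBot := right_nhdsWithin_Ioo_neBot hx₀r
    refine Filter.neBot_of_le (f := 𝓝[Ioo x₀ r] r) (le_inf ?_ ?_)
    · rw [comap_coe_nhds]; exact nhdsWithin_le_nhds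
    · exact le_principal_iff.2 (mem_of_superset self_mem_nhdsWithin
        (fun z hz => ⟨lt_trans hx₀a (EReal.coe_lt_coe_iff.2 hz.1), EReal.coe_lt_coe_iff.2 hz.2⟩))
  | top =>
    refine Filter.neBot_of_le (f := atTop) (le_inf ?_ ?_)
    · rw [← Filter.tendsto_iff_comap]
      exact EReal.tendsto_nhds_top_iff_real.2 fun x => eventually_atTop.2
        ⟨x + 1, fun y hy => EReal.coe_lt_coe_iff.2 (by linarith)⟩
    · refine le_principal_iff.2 ?_
      filter_upwards [Ici_mem_atTop x₀] with y hy
      exact ⟨lt_of_lt_of_le hx₀a (EReal.coe_le_coe_iff.2 hy), EReal.coe_lt_top y⟩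

lemma endFilter_left_neBot {a b : EReal} (hab : a < b) : (endFilter a a b).NeBot := by
  obtain ⟨x₀, hx₀a, hx₀b⟩ := EReal.lt_iff_exists_real_btwn.1 hab
  induction a with
  | top => exact absurd hab (by simp)
  | coe r =>
    have hrx₀ : r < x₀ := EReal.coe_lt_coe_iff.1 hx₀a
    have hne : (𝓝[Ioo r x₀] r).NeBot := left_nhdsWithin_Ioo_neBot hrx₀
    refine Filter.neBot_of_le (f := 𝓝[Ioo r x₀] r) (le_inf ?_ ?_)
    · rw [comap_coe_nhds]; exact nhdsWithin_le_nhds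
    · exact le_principal_iff.2 (mem_of_superset self_mem_nhdsWithin
        (fun z hz => ⟨EReal.coe_lt_coe_iff.2 hz.1, lt_trans (EReal.coe_lt_coe_iff.2 hz.2) hx₀b⟩))
  | bot =>
    refine Filter.neBot_of_le (f := atBot) (le_inf ?_ ?_)
    · rw [← Filter.tendsto_iff_comap]
      exact EReal.tendsto_nhds_bot_iff_real.2 fun x => eventually_atBot.2
        ⟨x - 1, fun y hy => EReal.coe_lt_coe_iff.2 (by linarith)⟩
    · refine le_principal_iff.2 ?_
      filter_upwards [Iic_mem_atBot x₀] with y hy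
      exact ⟨EReal.bot_lt_coe y, lt_of_le_of_lt (EReal.coe_le_coe_iff.2 hy) hx₀b⟩

/-- A function with zero derivative on an order-connected set is constant there. -/
lemma const_of_deriv_zero {a b : EReal} {H : ℝ → ℝ}
    (hH : ∀ x ∈ eIoo a b, HasDerivAt H 0 x) :
    ∀ x ∈ eIoo a b, ∀ y ∈ eIoo a b, H x = H y := by
  have key : ∀ x ∈ eIoo a b, ∀ y ∈ eIoo a b, x < y → H x = H y := by
    intro x hx y hy hxy
    have hsub : Icc x y ⊆ eIoo a b := fun z hz =>
      ⟨lt_of_lt_of_le hx.1 (EReal.coe_le_coe_iff.2 hz.1),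
       lt_of_le_of_lt (EReal.coe_le_coe_iff.2 hz.2) hy.2⟩
    have hcont : ContinuousOn H (Icc x y) := fun z hz =>
      ((hH z (hsub hz)).continuousAt).continuousWithinAt
    obtain ⟨c, _, hc⟩ := exists_hasDerivAt_eq_slope H (fun _ => 0) hxy hcont
      (fun z hz => hH z (hsub (Ioo_subset_Icc_self hz)))
    have hyx : y - x ≠ 0 := sub_ne_zero.2 hxy.ne'
    rcases div_eq_zero_iff.mp hc.symm with h | h
    · linarith
    · exact absurd h hyx
  intro x hx y hy
  rcases lt_trichotomy x y with h | h | h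
  · exact key x hx y hy h
  · rw [h]
  · exact (key y hy x hx h).symm

end HakeAux

open HakeAux

/-- Hake's theorem: the Newton integral of `f` over `(a,b)` exists with value `v` iff
the Newton integrals over `(a,c)` exist for all `c ∈ (a,b)` and tend to `v` as `c → b⁻`. -/
theorem stmt_3 (a b : EReal) (hab : a < b) (f : ℝ → ℝ) (v : ℝ) :
    HasNewton f a b v ↔
      ∃ g : ℝ → ℝ, (∀ c : ℝ, a < (c : EReal) → (c : EReal) < b →
          HasNewton f a (c : EReal) (g c)) ∧
        Filter.Tendsto g (endFilter b a b) (nhds v) := by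
  constructor
  · rintro ⟨F, La, Lb, hF, hFa, hFb, hv⟩
    refine ⟨fun c => F c - La, fun c hac hcb => ?_, ?_⟩
    · refine ⟨F, La, F c, fun x hx => hF x (eIoo_subset hcb.le hx),
        hFa.mono_left (endFilter_mono hcb.le), ?_, rfl⟩
      exact ((hF c ⟨hac, hcb⟩).continuousAt.tendsto).mono_left (endFilter_coe_le_nhds c a _)
    · rw [hv]
      exact hFb.sub_const La
  · rintro ⟨g, hg, hgv⟩
    -- normalized primitives
    have key : ∀ c : ℝ, ∃ G : ℝ → ℝ, a < (c : EReal) → (c : EReal) < b →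
        (∀ x ∈ eIoo a c, HasDerivAt G (f x) x) ∧
        Tendsto G (endFilter a a c) (𝓝 0) ∧
        Tendsto G (endFilter c a c) (𝓝 (g c)) := by
      intro c
      by_cases h : a < (c : EReal) ∧ (c : EReal) < b
      · obtain ⟨F, La, Lb, hF, hFa, hFc, hv⟩ := hg c h.1 h.2
        refine ⟨fun x => F x - La, fun _ _ => ⟨?_, ?_, ?_⟩⟩
        · exact fun x hx => (hF x hx).sub_const La
        · simpa using hFa.sub_const La
        · rw [hv]; exact hFc.sub_const La
      · exact ⟨0, fun h1 h2 => absurd ⟨h1, h2⟩ h⟩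
    choose G hG using key
    -- consistency of normalized primitives
    have consist : ∀ c c' : ℝ, a < (c : EReal) → (c : EReal) < b →
        a < (c' : EReal) → (c' : EReal) < b → c ≤ c' →
        ∀ x ∈ eIoo a c, G c x = G c' x := by
      intro c c' hac hcb hac' hcb' hcc' x hx
      have hle : (c : EReal) ≤ (c' : EReal) := EReal.coe_le_coe_iff.2 hcc'
      obtain ⟨h1, h2, h3⟩ := hG c hac hcb
      obtain ⟨h1', h2', h3'⟩ := hG c' hac' hcb'
      set H : ℝ → ℝ := fun y => G c y - G c' y with hHdef
      have hH : ∀ y ∈ eIoo a c, HasDerivAt H 0 y := by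
        intro y hy
        have h := (h1 y hy).sub (h1' y (eIoo_subset hle hy)); rw [sub_self] at h; exact h
      have hconst := const_of_deriv_zero hH
      -- H tends to 0 along endFilter a a c, but H is constantly H x there
      have hne : (endFilter a a (c : EReal)).NeBot := endFilter_left_neBot hac
      have ht0 : Tendsto H (endFilter a a (c : EReal)) (𝓝 0) := by
        simpa using h2.sub (h2'.mono_left (endFilter_mono hle))
      have htx : Tendsto H (endFilter a a (c : EReal)) (𝓝 (H x)) := by
        refine tendsto_const_nhds.congr' ?_
        filter_upwards [le_principal_iff.1 (inf_le_right :
          endFilter a a (c : EReal) ≤ Filter.principal (eIoo a c))] with y hy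
        exact (hconst x hx y hy)
      have : H x = 0 := tendsto_nhds_unique htx ht0
      have := this
      simpa [hHdef, sub_eq_zero] using this
    -- choose for each x a cutoff point p x with x < p x < b
    have pick : ∀ x : ℝ, ∃ c : ℝ, (x : EReal) < b → (x < c ∧ (c : EReal) < b) := by
      intro x
      by_cases h : (x : EReal) < b
      · obtain ⟨c, h1, h2⟩ := EReal.lt_iff_exists_real_btwn.1 h
        exact ⟨c, fun _ => ⟨EReal.coe_lt_coe_iff.1 h1, h2⟩⟩
      · exact ⟨0, fun h' => absurd h' h⟩
    choose p hp using pick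
    set F : ℝ → ℝ := fun x => G (p x) x with hFdef
    -- F agrees with G c on eIoo a c
    have hFG : ∀ c : ℝ, a < (c : EReal) → (c : EReal) < b →
        ∀ x ∈ eIoo a c, F x = G c x := by
      intro c hac hcb x hx
      have hxb : (x : EReal) < b := lt_trans hx.2 hcb
      obtain ⟨hxp, hpb⟩ := hp x hxb
      have hap : a < ((p x : ℝ) : EReal) := lt_trans hx.1 (EReal.coe_lt_coe_iff.2 hxp)
      have hxp' : x ∈ eIoo a (p x : ℝ) := ⟨hx.1, EReal.coe_lt_coe_iff.2 hxp⟩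
      rcases le_total c (p x) with h | h
      · exact (consist c (p x) hac hcb hap hpb h x hx).symm
      · exact consist (p x) c hap hpb hac hcb h x hxp'
    -- F is a primitive on eIoo a b
    have hF' : ∀ x ∈ eIoo a b, HasDerivAt F (f x) x := by
      intro x hx
      obtain ⟨hxp, hpb⟩ := hp x hx.2
      have hap : a < ((p x : ℝ) : EReal) := lt_trans hx.1 (EReal.coe_lt_coe_iff.2 hxp)
      have hxmem : x ∈ eIoo a (p x : ℝ) := ⟨hx.1, EReal.coe_lt_coe_iff.2 hxp⟩
      have hderiv := (hG (p x) hap hpb).1 x hxmem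
      refine hderiv.congr_of_eventuallyEq ?_
      filter_upwards [(isOpen_eIoo a (p x : ℝ)).mem_nhds hxmem] with y hy
      exact hFG (p x) hap hpb y hy
    -- limit at a
    obtain ⟨c₀, hac₀, hc₀b⟩ := EReal.lt_iff_exists_real_btwn.1 hab
    have hle_a : endFilter a a b ≤ endFilter a a (c₀ : EReal) := by
      refine le_inf inf_le_left (le_principal_iff.2 ?_)
      have h1 : {x : ℝ | (x : EReal) < (c₀ : EReal)} ∈
          (𝓝 a).comap (fun x : ℝ => (x : EReal)) :=
        preimage_mem_comap ((isOpen_Iio (a := ((c₀ : ℝ) : EReal))).mem_nhds hac₀)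
      have h2 : eIoo a b ∈ Filter.principal (eIoo a b) := mem_principal_self _
      refine mem_of_superset (inter_mem (mem_inf_of_left h1) (mem_inf_of_right h2)) ?_
      rintro x ⟨hx1, hx2⟩
      exact ⟨hx2.1, hx1⟩
    have hFa : Tendsto F (endFilter a a b) (𝓝 0) := by
      refine (((hG c₀ hac₀ hc₀b).2.1).mono_left hle_a).congr' ?_
      have h1 : {x : ℝ | (x : EReal) < (c₀ : EReal)} ∈
          (𝓝 a).comap (fun x : ℝ => (x : EReal)) :=
        preimage_mem_comap ((isOpen_Iio (a := ((c₀ : ℝ) : EReal))).mem_nhds hac₀)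
      filter_upwards [mem_inf_of_left h1,
        le_principal_iff.1 (inf_le_right : endFilter a a b ≤ Filter.principal (eIoo a b))]
        with x hx1 hx2
      exact (hFG c₀ hac₀ hc₀b x ⟨hx2.1, hx1⟩).symm
    -- F c = g c on eIoo a b
    have hFg : ∀ c : ℝ, a < (c : EReal) → (c : EReal) < b → F c = g c := by
      intro c hac hcb
      have hne : (endFilter (c : EReal) a (c : EReal)).NeBot := endFilter_right_neBot hac
      have ht1 : Tendsto F (endFilter (c : EReal) a (c : EReal)) (𝓝 (F c)) :=
        ((hF' c ⟨hac, hcb⟩).continuousAt.tendsto).mono_left (endFilter_coe_le_nhds c a _)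
      have ht2 : Tendsto F (endFilter (c : EReal) a (c : EReal)) (𝓝 (g c)) := by
        refine ((hG c hac hcb).2.2).congr' ?_
        filter_upwards [le_principal_iff.1 (inf_le_right : endFilter (c : EReal) a (c : EReal)
          ≤ Filter.principal (eIoo a c))] with y hy
        exact (hFG c hac hcb y hy).symm
      exact tendsto_nhds_unique ht1 ht2
    -- limit at b
    have hFb : Tendsto F (endFilter b a b) (𝓝 v) := by
      refine hgv.congr' ?_
      filter_upwards [le_principal_iff.1 (inf_le_right : endFilter b a b
        ≤ Filter.principal (eIoo a b))] with c hc
      exact (hFg c hc.1 hc.2).symm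
    exact ⟨F, 0, v, hF', hFa, hFb, by ring⟩
end
end

section
/- Integration by parts for the Newton integral: let a, b ∈ ℝ ∪ {±∞}, a < b, and F, G be primitives on (a,b) of f, g respectively. If two of the three quantities ∫ₐᵇ fG, (FG)(b⁻) − (FG)(a⁺), ∫ₐᵇ Fg are defined and finite, then so is the third, and ∫ₐᵇ fG = ((FG)(b⁻) − (FG)(a⁺)) − ∫ₐᵇ Fg. -/
open Filter Set Topology

noncomputable section

lemma eIoo_ordConnected (a b : EReal) : Set.OrdConnected (eIoo a b) := by
  constructor
  intro x hx y hy z hz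
  exact ⟨lt_of_lt_of_le hx.1 (EReal.coe_le_coe_iff.2 hz.1),
    lt_of_le_of_lt (EReal.coe_le_coe_iff.2 hz.2) hy.2⟩

lemma const_of_deriv_zero {a b : EReal} {φ : ℝ → ℝ}
    (hφ : ∀ x ∈ eIoo a b, HasDerivAt φ 0 x) {x y : ℝ}
    (hx : x ∈ eIoo a b) (hy : y ∈ eIoo a b) : φ x = φ y := by
  wlog hxy : x ≤ y generalizing x y
  · exact (this hy hx (le_of_not_ge hxy)).symm
  have hsub : Set.Icc x y ⊆ eIoo a b := (eIoo_ordConnected a b).out hx hy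
  have := constant_of_has_deriv_right_zero
    (f := φ) (a := x) (b := y)
    (fun z hz => ((hφ z (hsub hz)).continuousAt).continuousWithinAt)
    (fun z hz => ((hφ z (hsub ⟨hz.1, hz.2.le⟩)).hasDerivWithinAt))
  exact (this y ⟨hxy, le_rfl⟩).symm

lemma eIoo_mem_endFilter (c a b : EReal) : eIoo a b ∈ endFilter c a b :=
  Filter.le_principal_iff.1 inf_le_right

/-- Integration by parts for the Newton integral: with `F' = f` and `G' = g` on `(a,b)`,
if two of the three terms (the integral of `f*G`, the difference of limits of `F*G`,
and the integral of `F*g`) are defined and finite, so is the third, and the first equals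
the second minus the third. -/
theorem stmt_6 (a b : EReal) (hab : a < b) (f g F G : ℝ → ℝ)
    (hF : ∀ x ∈ eIoo a b, HasDerivAt F (f x) x)
    (hG : ∀ x ∈ eIoo a b, HasDerivAt G (g x) x) :
    (∀ v w : ℝ, HasNewton (fun x => f x * G x) a b v →
      (∃ La Lb : ℝ, Filter.Tendsto (fun x => F x * G x) (endFilter a a b) (nhds La) ∧
        Filter.Tendsto (fun x => F x * G x) (endFilter b a b) (nhds Lb) ∧ w = Lb - La) →
      HasNewton (fun x => F x * g x) a b (w - v)) ∧
    (∀ v u : ℝ, HasNewton (fun x => f x * G x) a b v →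
      HasNewton (fun x => F x * g x) a b u →
      (∃ La Lb : ℝ, Filter.Tendsto (fun x => F x * G x) (endFilter a a b) (nhds La) ∧
        Filter.Tendsto (fun x => F x * G x) (endFilter b a b) (nhds Lb) ∧ v + u = Lb - La)) ∧
    (∀ w u : ℝ,
      (∃ La Lb : ℝ, Filter.Tendsto (fun x => F x * G x) (endFilter a a b) (nhds La) ∧
        Filter.Tendsto (fun x => F x * G x) (endFilter b a b) (nhds Lb) ∧ w = Lb - La) →
      HasNewton (fun x => F x * g x) a b u →
      HasNewton (fun x => f x * G x) a b (w - u)) := by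
  have hFG : ∀ x ∈ eIoo a b,
      HasDerivAt (fun x => F x * G x) (f x * G x + F x * g x) x :=
    fun x hx => (hF x hx).mul (hG x hx)
  refine ⟨?_, ?_, ?_⟩
  · rintro v w ⟨H, La, Lb, hH, hHa, hHb, hv⟩ ⟨Ma, Mb, hMa, hMb, hw⟩
    refine ⟨fun x => F x * G x - H x, Ma - La, Mb - Lb, ?_, hMa.sub hHa, hMb.sub hHb, by
      rw [hv, hw]; ring⟩
    intro x hx
    have : HasDerivAt (fun x => F x * G x - H x) _ x := (hFG x hx).sub (hH x hx)
    convert this using 1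
    ring
  · rintro v u ⟨H1, La1, Lb1, hH1, hHa1, hHb1, hv⟩ ⟨H2, La2, Lb2, hH2, hHa2, hHb2, hu⟩
    obtain ⟨x0, hx0a, hx0b⟩ := EReal.exists_between_coe_real hab
    have hx0 : x0 ∈ eIoo a b := ⟨hx0a, hx0b⟩
    set c : ℝ := F x0 * G x0 - (H1 x0 + H2 x0) with hc
    have hzero : ∀ x ∈ eIoo a b,
        HasDerivAt (fun x => F x * G x - (H1 x + H2 x)) 0 x := by
      intro x hx
      have : HasDerivAt (fun x => F x * G x - (H1 x + H2 x)) _ x :=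
        (hFG x hx).sub ((hH1 x hx).add (hH2 x hx))
      convert this using 1
      ring
    have heq : ∀ x ∈ eIoo a b, F x * G x = H1 x + H2 x + c := by
      intro x hx
      have := const_of_deriv_zero hzero hx hx0
      rw [hc]; linarith
    have hev : ∀ c' : EReal, (fun x => H1 x + H2 x + c) =ᶠ[endFilter c' a b]
        (fun x => F x * G x) := by
      intro c'
      filter_upwards [eIoo_mem_endFilter c' a b] with x hx
      exact (heq x hx).symm
    refine ⟨La1 + La2 + c, Lb1 + Lb2 + c, ?_, ?_, by rw [hv, hu]; ring⟩
    · exact Filter.Tendsto.congr' (hev a) (((hHa1.add hHa2).add_const c))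
    · exact Filter.Tendsto.congr' (hev b) (((hHb1.add hHb2).add_const c))
  · rintro w u ⟨Ma, Mb, hMa, hMb, hw⟩ ⟨H, La, Lb, hH, hHa, hHb, hu⟩
    refine ⟨fun x => F x * G x - H x, Ma - La, Mb - Lb, ?_, hMa.sub hHa, hMb.sub hHb, by
      rw [hu, hw]; ring⟩
    intro x hx
    have : HasDerivAt (fun x => F x * G x - H x) _ x := (hFG x hx).sub (hH x hx)
    convert this using 1
    ring
end
end

section
/- Substitution rule for the Newton integral: suppose a,b,c,d ∈ ℝ ∪ {±∞} with a < b, c < d, g : (c,d) → (a,b) is differentiable, g(x) → a as x → c⁺, g(x) → b as x → d⁻, and the Newton integral of f over (a,b) exists. Then the Newton integral of (f∘g)·g' over (c,d) exists and equals ∫ₐᵇ f. -/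
open Filter Set Topology

noncomputable section

/-- Substitution rule for the Newton integral. -/
theorem stmt_7 (a b c d : EReal) (hab : a < b) (hcd : c < d)
    (f g g' : ℝ → ℝ) (v : ℝ)
    (hmaps : ∀ x ∈ eIoo c d, g x ∈ eIoo a b)
    (hderiv : ∀ x ∈ eIoo c d, HasDerivAt g (g' x) x)
    (hc : Filter.Tendsto (fun x => ((g x : ℝ) : EReal)) (endFilter c c d) (nhds a))
    (hd : Filter.Tendsto (fun x => ((g x : ℝ) : EReal)) (endFilter d c d) (nhds b))
    (hf : HasNewton f a b v) :
    HasNewton (fun x => f (g x) * g' x) c d v := by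
  obtain ⟨F, La, Lb, hF, hLa, hLb, hv⟩ := hf
  have hmem : ∀ᶠ x in endFilter c c d, g x ∈ eIoo a b :=
    ((eventually_principal.mpr fun x hx => hmaps x hx).filter_mono inf_le_right : _)
  have hmem' : ∀ᶠ x in endFilter d c d, g x ∈ eIoo a b :=
    ((eventually_principal.mpr fun x hx => hmaps x hx).filter_mono inf_le_right : _)
  have hgc : Tendsto g (endFilter c c d) (endFilter a a b) := by
    rw [show endFilter a a b = _ ⊓ _ from rfl, tendsto_inf]
    exact ⟨tendsto_comap_iff.mpr hc, tendsto_principal.mpr hmem⟩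
  have hgd : Tendsto g (endFilter d c d) (endFilter b a b) := by
    rw [show endFilter b a b = _ ⊓ _ from rfl, tendsto_inf]
    exact ⟨tendsto_comap_iff.mpr hd, tendsto_principal.mpr hmem'⟩
  exact ⟨F ∘ g, La, Lb,
    fun x hx => (hF (g x) (hmaps x hx)).comp x (hderiv x hx),
    hLa.comp hgc, hLb.comp hgd, hv⟩
end
end

section
/- For f(x,z) = x·e^{−x²(1+z²)} on (0,∞)², both iterated Newton integrals ∫₀^∞(∫₀^∞ f(x,z) dz) dx and ∫₀^∞(∫₀^∞ f(x,z) dx) dz exist and are equal. -/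
open Filter Set Topology MeasureTheory

noncomputable section

lemma eIoo_zero_top : eIoo ((0 : ℝ) : EReal) ⊤ = Ioi (0 : ℝ) := by
  ext x
  simp [eIoo, EReal.coe_lt_coe_iff, EReal.coe_lt_top]

lemma endFilter_zero : endFilter ((0 : ℝ) : EReal) ((0 : ℝ) : EReal) ⊤ = 𝓝[>] (0 : ℝ) := by
  rw [endFilter, eIoo_zero_top, nhdsWithin]
  congr 1
  rw [EReal.nhds_coe, Filter.comap_map (fun a b => by exact_mod_cast id)]

lemma endFilter_top : endFilter ⊤ ((0 : ℝ) : EReal) ⊤ = atTop := by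
  rw [endFilter, eIoo_zero_top]
  have h1 : (nhds (⊤ : EReal)).comap (fun x : ℝ => (x : EReal)) = atTop := by
    rw [EReal.nhds_top']
    rw [Filter.comap_iInf]
    have : ∀ a : ℝ, (𝓟 (Ioi (a : EReal))).comap (fun x : ℝ => (x : EReal)) = 𝓟 (Ioi a) := by
      intro a
      rw [Filter.comap_principal]
      congr 1
      ext x
      simp [EReal.coe_lt_coe_iff]
    simp_rw [this]
    exact atTop_basis_Ioi.eq_iInf.symm
  rw [h1, inf_eq_left]
  exact le_principal_iff.2 (Ioi_mem_atTop 0)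

lemma hasNewton_of_integrable {g : ℝ → ℝ} (hc : Continuous g)
    (hi : IntegrableOn g (Ioi 0)) :
    HasNewton g ((0 : ℝ) : EReal) ⊤ (∫ x in Ioi (0:ℝ), g x) := by
  refine ⟨fun z => ∫ t in (0:ℝ)..z, g t, 0, ∫ x in Ioi (0:ℝ), g x, ?_, ?_, ?_, by ring⟩
  · intro x _
    exact intervalIntegral.integral_hasDerivAt_right (hc.intervalIntegrable _ _)
      hc.stronglyMeasurable.stronglyMeasurableAtFilter hc.continuousAt
  · rw [endFilter_zero]
    have hcont : Continuous fun z => ∫ t in (0:ℝ)..z, g t :=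
      intervalIntegral.continuous_primitive (fun _ _ => hc.intervalIntegrable _ _) 0
    have := hcont.continuousAt (x := (0:ℝ))
    rw [ContinuousAt, intervalIntegral.integral_same] at this
    exact this.mono_left nhdsWithin_le_nhds
  · rw [endFilter_top]
    exact intervalIntegral_tendsto_integral_Ioi 0 hi tendsto_id

/-- Both iterated Newton integrals of `x * exp (-x^2 * (1+z^2))` over `(0,∞)²` exist and
are equal. -/
theorem stmt_9 :
    ∃ (I J : ℝ → ℝ) (v : ℝ),
      (∀ x : ℝ, 0 < x →
        HasNewton (fun z => x * Real.exp (-(x ^ 2) * (1 + z ^ 2))) ((0 : ℝ) : EReal) ⊤ (I x)) ∧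
      HasNewton I ((0 : ℝ) : EReal) ⊤ v ∧
      (∀ z : ℝ, 0 < z →
        HasNewton (fun x => x * Real.exp (-(x ^ 2) * (1 + z ^ 2))) ((0 : ℝ) : EReal) ⊤ (J z)) ∧
      HasNewton J ((0 : ℝ) : EReal) ⊤ v := by
  refine ⟨fun x => Real.sqrt Real.pi / 2 * Real.exp (-(x ^ 2)),
    fun z => 1 / (2 * (1 + z ^ 2)), Real.pi / 4, ?_, ?_, ?_, ?_⟩
  · -- inner integral in z for fixed x > 0
    intro x hx
    have hx2 : (0:ℝ) < x ^ 2 := by positivity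
    have heq : (fun z : ℝ => x * Real.exp (-(x ^ 2) * (1 + z ^ 2))) =
        fun z : ℝ => (x * Real.exp (-(x ^ 2))) * Real.exp (-(x ^ 2) * z ^ 2) := by
      funext z
      rw [mul_assoc, ← Real.exp_add]
      ring_nf
    have hc : Continuous fun z : ℝ => x * Real.exp (-(x ^ 2) * (1 + z ^ 2)) := by
      continuity
    have hint : IntegrableOn (fun z : ℝ => x * Real.exp (-(x ^ 2) * (1 + z ^ 2))) (Ioi 0) := by
      rw [heq]
      exact ((integrable_exp_neg_mul_sq hx2).const_mul _).integrableOn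
    have := hasNewton_of_integrable hc hint
    have hval : ∫ z in Ioi (0:ℝ), x * Real.exp (-(x ^ 2) * (1 + z ^ 2)) =
        Real.sqrt Real.pi / 2 * Real.exp (-(x ^ 2)) := by
      rw [heq, MeasureTheory.integral_const_mul, integral_gaussian_Ioi,
        Real.sqrt_div Real.pi_pos.le, Real.sqrt_sq hx.le]
      field_simp
    rwa [hval] at this
  · -- outer integral in x
    have hc : Continuous fun x : ℝ => Real.sqrt Real.pi / 2 * Real.exp (-(x ^ 2)) := by
      continuity
    have hint : IntegrableOn (fun x : ℝ => Real.sqrt Real.pi / 2 * Real.exp (-(x ^ 2)))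
        (Ioi 0) := by
      have : (fun x : ℝ => Real.sqrt Real.pi / 2 * Real.exp (-(x ^ 2))) =
          fun x : ℝ => Real.sqrt Real.pi / 2 * Real.exp (-(1:ℝ) * x ^ 2) := by
        funext x; ring_nf
      rw [this]
      exact ((integrable_exp_neg_mul_sq one_pos).const_mul _).integrableOn
    have := hasNewton_of_integrable hc hint
    have hval : ∫ x in Ioi (0:ℝ), Real.sqrt Real.pi / 2 * Real.exp (-(x ^ 2)) =
        Real.pi / 4 := by
      have heq : (fun x : ℝ => Real.sqrt Real.pi / 2 * Real.exp (-(x ^ 2))) =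
          fun x : ℝ => Real.sqrt Real.pi / 2 * Real.exp (-(1:ℝ) * x ^ 2) := by
        funext x; ring_nf
      rw [heq, MeasureTheory.integral_const_mul, integral_gaussian_Ioi, div_one]
      rw [div_mul_div_comm, Real.mul_self_sqrt Real.pi_pos.le]
      norm_num
    rwa [hval] at this
  · -- inner integral in x for fixed z > 0: explicit primitive
    intro z _
    have hz2 : (0:ℝ) < 1 + z ^ 2 := by positivity
    refine ⟨fun x => -Real.exp (-(x ^ 2) * (1 + z ^ 2)) / (2 * (1 + z ^ 2)),
      -1 / (2 * (1 + z ^ 2)), 0, ?_, ?_, ?_, by ring⟩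
    · intro x _
      have h1 : HasDerivAt (fun x : ℝ => -(x ^ 2) * (1 + z ^ 2))
          (-(2 * x) * (1 + z ^ 2)) x := by
        have := ((hasDerivAt_pow 2 x).neg).mul_const (1 + z ^ 2)
        simpa using this
      have h2 := (h1.exp).neg.div_const (2 * (1 + z ^ 2))
      refine h2.congr_deriv ?_
      rw [div_eq_iff (by positivity)]
      ring
    · rw [endFilter_zero]
      have hcont : Continuous fun x : ℝ =>
          -Real.exp (-(x ^ 2) * (1 + z ^ 2)) / (2 * (1 + z ^ 2)) := by continuity
      have := hcont.continuousAt (x := (0:ℝ))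
      rw [ContinuousAt] at this
      have h0 : -Real.exp (-((0:ℝ) ^ 2) * (1 + z ^ 2)) / (2 * (1 + z ^ 2)) =
          -1 / (2 * (1 + z ^ 2)) := by norm_num
      rw [h0] at this
      exact this.mono_left nhdsWithin_le_nhds
    · rw [endFilter_top]
      have h1 : Tendsto (fun x : ℝ => -(x ^ 2) * (1 + z ^ 2)) atTop atBot := by
        apply Tendsto.atBot_mul_const hz2
        exact tendsto_neg_atTop_atBot.comp (tendsto_pow_atTop two_ne_zero)
      have h2 : Tendsto (fun x : ℝ => Real.exp (-(x ^ 2) * (1 + z ^ 2))) atTop (𝓝 0) :=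
        Real.tendsto_exp_atBot.comp h1
      have := (h2.neg).div_const (2 * (1 + z ^ 2))
      simpa using this
  · -- outer integral in z: arctan primitive
    refine ⟨fun z => Real.arctan z / 2, 0, Real.pi / 4, ?_, ?_, ?_, by ring⟩
    · intro z _
      have := (Real.hasDerivAt_arctan z).div_const 2
      refine this.congr_deriv ?_
      have : (0:ℝ) < 1 + z ^ 2 := by positivity
      rw [div_div, mul_comm]
    · rw [endFilter_zero]
      have : Tendsto (fun z : ℝ => Real.arctan z / 2) (𝓝 0) (𝓝 (Real.arctan 0 / 2)) :=
        (Real.continuous_arctan.div_const 2).continuousAt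
      rw [Real.arctan_zero, zero_div] at this
      exact this.mono_left nhdsWithin_le_nhds
    · rw [endFilter_top]
      have h1 : Tendsto Real.arctan atTop (𝓝 (Real.pi / 2)) :=
        Real.tendsto_arctan_atTop.mono_right nhdsWithin_le_nhds
      have := h1.div_const 2
      have he : Real.pi / 2 / 2 = Real.pi / 4 := by ring
      rwa [he] at this
end
end

section
/- There exist real constants c and C such that for all n ∈ ℕ, |log(n!) − c − ∫_{1/2}^{n+1/2} log x dx| ≤ C/n, where ∫_{1/2}^{n+1/2} log x dx = (x log x − x)(n+1/2) − (x log x − x)(1/2). -/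
open Filter Set Topology

noncomputable section

lemma core {m : ℝ} (hm : 1 ≤ m) :
    |Real.log m - ((m + 1/2) * Real.log (m + 1/2) - (m - 1/2) * Real.log (m - 1/2) - 1)|
      ≤ 1 / (2 * m^2) := by
  obtain ⟨t, htdef⟩ : ∃ t : ℝ, t = 1 / (2*m) := ⟨_, rfl⟩
  have hm0 : 0 < m := by linarith
  have ht : 0 < t := by rw [htdef]; positivity
  have htm : 2 * t * m = 1 := by rw [htdef]; field_simp
  have ht2 : t ≤ 1/2 := by
    rw [htdef, div_le_iff₀ (by linarith)]; linarith
  have hp : m + 1/2 = m * (1 + t) := by nlinarith [htm]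
  have hq : m - 1/2 = m * (1 - t) := by nlinarith [htm]
  have hlp : Real.log (m + 1/2) = Real.log m + Real.log (1 + t) := by
    rw [hp, Real.log_mul (ne_of_gt hm0) (by positivity)]
  have hlq : Real.log (m - 1/2) = Real.log m + Real.log (1 - t) := by
    rw [hq, Real.log_mul (ne_of_gt hm0) (by nlinarith)]
  have h1 : |(-t : ℝ)| < 1 := by rw [abs_neg, abs_of_pos ht]; linarith
  have h2 : |t| < 1 := by rw [abs_of_pos ht]; linarith
  have A := Real.abs_log_sub_add_sum_range_le h1 3
  have B := Real.abs_log_sub_add_sum_range_le h2 3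
  rw [abs_neg, abs_of_pos ht] at A
  rw [abs_of_pos ht] at B
  norm_num [Finset.sum_range_succ] at A B
  have hden : t^4 / (1-t) ≤ 2*t^4 := by
    rw [div_le_iff₀ (by linarith)]; nlinarith [pow_pos ht 4]
  obtain ⟨e1, he1⟩ : ∃ e : ℝ, e = Real.log (1+t) - (t - t^2/2 + t^3/3) := ⟨_, rfl⟩
  obtain ⟨e2, he2⟩ : ∃ e : ℝ, e = Real.log (1-t) - (-t - t^2/2 - t^3/3) := ⟨_, rfl⟩
  have hA : |e1| ≤ 2*t^4 := by
    refine le_trans (le_of_eq ?_) (le_trans A hden)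
    rw [he1]; rw [show Real.log (1+t) - (t - t^2/2 + t^3/3) = -t + t ^ 2 / 2 + (-t) ^ 3 / 3 + Real.log (1 + t) from by ring]
  have hB : |e2| ≤ 2*t^4 := by
    refine le_trans (le_of_eq ?_) (le_trans B hden)
    rw [he2]; rw [show Real.log (1-t) - (-t - t^2/2 - t^3/3) = t + t ^ 2 / 2 + t ^ 3 / 3 + Real.log (1 - t) from by ring]
  have hL1 : Real.log (1+t) = (t - t^2/2 + t^3/3) + e1 := by rw [he1]; ring
  have hL2 : Real.log (1-t) = (-t - t^2/2 - t^3/3) + e2 := by rw [he2]; ring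
  rw [hlp, hlq, hL1, hL2]
  have key : Real.log m - ((m + 1/2) * (Real.log m + ((t - t^2/2 + t^3/3) + e1))
      - (m - 1/2) * (Real.log m + ((-t - t^2/2 - t^3/3) + e2)) - 1)
      = t^2/6 - (m + 1/2) * e1 + (m - 1/2) * e2 := by
    linear_combination (-(1 : ℝ) - t^2/3) * htm
  rw [key]
  have hfin : 2 * t^2 = 1 / (2 * m^2) := by
    rw [htdef]; field_simp
  rw [← hfin]
  obtain ⟨hA1, hA2⟩ := abs_le.mp hA
  obtain ⟨hB1, hB2⟩ := abs_le.mp hB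
  have ht3 : 4 * m * t^4 = 2 * t^3 := by linear_combination 2*t^3*htm
  have ht4 : 4 * m * t^4 ≤ t^2 := by
    rw [ht3]; nlinarith [sq_nonneg t, mul_le_mul_of_nonneg_left ht2 (le_of_lt (mul_pos ht ht))]
  have hu1 := mul_le_mul_of_nonneg_left hA2 (show (0:ℝ) ≤ m + 1/2 by linarith)
  have hl1 := mul_le_mul_of_nonneg_left hA1 (show (0:ℝ) ≤ m + 1/2 by linarith)
  have hu2 := mul_le_mul_of_nonneg_left hB2 (show (0:ℝ) ≤ m - 1/2 by linarith)
  have hl2 := mul_le_mul_of_nonneg_left hB1 (show (0:ℝ) ≤ m - 1/2 by linarith)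
  have hs1 : (m + 1/2) * (2*t^4) + (m - 1/2) * (2*t^4) = 4 * m * t^4 := by ring
  have hs2 : (m + 1/2) * (-(2*t^4)) = -((m + 1/2) * (2*t^4)) := by ring
  have hs3 : (m - 1/2) * (-(2*t^4)) = -((m - 1/2) * (2*t^4)) := by ring
  have htsq : 0 < t^2 := by positivity
  rw [abs_le]
  constructor
  · linarith [hu1, hl2]
  · linarith [hl1, hu2]

noncomputable def aa (n : ℕ) : ℝ :=
  Real.log (Nat.factorial n : ℝ) -
    ((((n : ℝ) + 1 / 2) * Real.log ((n : ℝ) + 1 / 2) - ((n : ℝ) + 1 / 2)) -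
     ((1 / 2 : ℝ) * Real.log (1 / 2 : ℝ) - (1 / 2 : ℝ)))

lemma step (k : ℕ) : |aa (k+1) - aa k| ≤ 1 / (2 * ((k:ℝ)+1)^2) := by
  have hfac : Real.log (Nat.factorial (k+1) : ℝ)
      = Real.log ((k:ℝ)+1) + Real.log (Nat.factorial k : ℝ) := by
    rw [Nat.factorial_succ]
    push_cast
    rw [Real.log_mul (show ((k:ℝ)+1) ≠ 0 from by positivity) (show ((Nat.factorial k : ℕ) : ℝ) ≠ 0 from by exact_mod_cast (Nat.factorial_pos k).ne')]
  have hm : (1:ℝ) ≤ (k:ℝ) + 1 := by have := Nat.cast_nonneg (α:=ℝ) k; linarith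
  have h' := core hm
  rw [show ((k:ℝ)+1) + 1/2 = (k:ℝ) + 1 + 1/2 from by ring,
      show ((k:ℝ)+1) - 1/2 = (k:ℝ) + 1/2 from by ring] at h'
  have he : aa (k+1) - aa k
      = Real.log ((k:ℝ)+1) - (((k:ℝ) + 1 + 1/2) * Real.log ((k:ℝ) + 1 + 1/2)
        - ((k:ℝ) + 1/2) * Real.log ((k:ℝ) + 1/2) - 1) := by
    unfold aa
    rw [hfac]
    push_cast
    ring
  rw [he]
  exact h'

lemma dsummable : Summable (fun k => |aa (k+1) - aa k|) := by
  have h2 : Summable (fun k : ℕ => 1 / ((k:ℝ)+1)^2) := by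
    have h0 := (Real.summable_one_div_nat_pow (p := 2)).mpr (by norm_num)
    have h1 := (summable_nat_add_iff 1).mpr h0
    simpa [add_comm] using h1
  refine Summable.of_nonneg_of_le (fun k => abs_nonneg _) (fun k => ?_)
    (h2.mul_left (1/2))
  calc |aa (k+1) - aa k| ≤ 1 / (2 * ((k:ℝ)+1)^2) := step k
    _ = 1/2 * (1 / ((k:ℝ)+1)^2) := by rw [div_mul_div_comm]; norm_num

lemma psum (n N : ℕ) (hn : 1 ≤ n) :
    ∑ k ∈ Finset.range N, |aa (k + n + 1) - aa (k + n)| ≤ 1/(2*(n:ℝ)) - 1/(2*((n:ℝ)+N)) := by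
  induction N with
  | zero => simp
  | succ N ih =>
    rw [Finset.sum_range_succ]
    have hx : (1:ℝ) ≤ (n:ℝ) + N := by
      have : (1:ℝ) ≤ (n:ℝ) := by exact_mod_cast hn
      have : (0:ℝ) ≤ (N:ℝ) := Nat.cast_nonneg N
      linarith
    have hs := step (N + n)
    have hs' : |aa (N + n + 1) - aa (N + n)| ≤ 1 / (2 * ((n:ℝ) + N + 1)^2) := by
      convert hs using 3
      push_cast
      ring
    have hkey : 1 / (2 * ((n:ℝ) + N + 1)^2) ≤ 1/(2*((n:ℝ)+N)) - 1/(2*((n:ℝ)+N+1)) := by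
      rw [div_sub_div _ _ (by positivity) (by positivity), div_le_div_iff₀ (by positivity) (by positivity)]
      ring_nf
      nlinarith [hx]
    push_cast
    rw [show ((n:ℝ) + ((N:ℝ)+1)) = ((n:ℝ)+(N:ℝ)+1) from by ring]
    linarith [ih]

/-- First expression of `n!` by an integral:
`log (n!) = c + O(1/n) + (integral of log from 1/2 to n + 1/2)`, the integral computed
by the primitive `x * log x - x`. -/
theorem stmt_14 :
    ∃ c C : ℝ, ∀ n : ℕ, 1 ≤ n →
      |Real.log (Nat.factorial n : ℝ) - c -
        ((((n : ℝ) + 1 / 2) * Real.log ((n : ℝ) + 1 / 2) - ((n : ℝ) + 1 / 2)) -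
         ((1 / 2 : ℝ) * Real.log (1 / 2 : ℝ) - (1 / 2 : ℝ)))| ≤ C / (n : ℝ) := by
  have hsum : Summable (fun k => aa (k+1) - aa k) := dsummable.of_abs
  refine ⟨aa 0 + ∑' k, (aa (k+1) - aa k), 1/2, fun n hn => ?_⟩
  have hn1 : (1:ℝ) ≤ (n:ℝ) := by exact_mod_cast hn
  have hpart : aa n = aa 0 + ∑ k ∈ Finset.range n, (aa (k+1) - aa k) := by
    rw [Finset.sum_range_sub]; ring
  have hsplit := Summable.sum_add_tsum_nat_add (f := fun k => aa (k+1) - aa k) n hsum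
  have h1 : aa n - (aa 0 + ∑' k, (aa (k+1) - aa k))
      = -(∑' k, (aa (k + n + 1) - aa (k + n))) := by
    rw [hpart]; linarith [hsplit]
  rw [show Real.log (Nat.factorial n : ℝ) - (aa 0 + ∑' k, (aa (k+1) - aa k)) -
        ((((n : ℝ) + 1 / 2) * Real.log ((n : ℝ) + 1 / 2) - ((n : ℝ) + 1 / 2)) -
         ((1 / 2 : ℝ) * Real.log (1 / 2 : ℝ) - (1 / 2 : ℝ)))
      = aa n - (aa 0 + ∑' k, (aa (k+1) - aa k)) from by unfold aa; ring, h1, abs_neg]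
  have hsh : Summable (fun k => |aa (k + n + 1) - aa (k + n)|) :=
    (summable_nat_add_iff n).mpr dsummable
  have habs := norm_tsum_le_tsum_norm (f := fun k => aa (k + n + 1) - aa (k + n))
    (by simpa using hsh)
  simp only [Real.norm_eq_abs] at habs
  have htail : ∑' k, |aa (k + n + 1) - aa (k + n)| ≤ 1/(2*(n:ℝ)) := by
    apply Real.tsum_le_of_sum_range_le (fun k => abs_nonneg _)
    intro N
    have := psum n N hn
    have hN : (0:ℝ) ≤ 1/(2*((n:ℝ)+N)) := by positivity
    linarith
  calc |∑' k, (aa (k + n + 1) - aa (k + n))| ≤ ∑' k, |aa (k + n + 1) - aa (k + n)| := habs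
    _ ≤ 1/(2*(n:ℝ)) := htail
    _ = 1/2/(n:ℝ) := by rw [div_div]
end
end

section
/- The Gauss integral via the Newton integral: ∫_{−∞}^{+∞} e^{−t²} dt = √π, where the integral is the Newton integral, i.e., e^{−t²} has a primitive F on ℝ with finite limits at ±∞ and F(+∞) − F(−∞) = √π. -/
open Filter Set Topology MeasureTheory

noncomputable section

lemma comap_coe_nhds_top : Filter.comap (fun x : ℝ => (x : EReal)) (nhds ⊤) = atTop := by
  refine (EReal.nhds_top_basis.comap _).ext atTop_basis_Ioi ?_ ?_
  · intro a _
    exact ⟨a, trivial, fun x hx => by simpa using hx⟩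
  · intro a _
    exact ⟨a, trivial, fun x hx => by simpa using hx⟩

lemma comap_coe_nhds_bot : Filter.comap (fun x : ℝ => (x : EReal)) (nhds ⊥) = atBot := by
  refine (EReal.nhds_bot_basis.comap _).ext atBot_basis_Iio ?_ ?_
  · intro a _
    exact ⟨a, trivial, fun x hx => by simpa using hx⟩
  · intro a _
    exact ⟨a, trivial, fun x hx => by simpa using hx⟩

lemma eIoo_bot_top : eIoo ⊥ ⊤ = Set.univ := by
  ext x
  simp [eIoo, EReal.bot_lt_coe, EReal.coe_lt_top]

/-- The Gauss integral via the Newton integral: the Newton integral of `exp (-t^2)`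
over `(-∞, +∞)` exists and equals `sqrt π`. -/
theorem stmt_18 :
    HasNewton (fun t => Real.exp (-(t ^ 2))) ⊥ ⊤ (Real.sqrt Real.pi) := by
  have hint : Integrable (fun t : ℝ => Real.exp (-(t ^ 2))) := by
    have := integrable_exp_neg_mul_sq (b := 1) one_pos
    simpa using this
  set f : ℝ → ℝ := fun t => Real.exp (-(t ^ 2)) with hf
  set F : ℝ → ℝ := fun x => ∫ t in (0:ℝ)..x, f t with hF
  have hcont : Continuous f := by continuity
  refine ⟨F, -∫ t in Set.Iic (0:ℝ), f t, ∫ t in Set.Ioi (0:ℝ), f t, ?_, ?_, ?_, ?_⟩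
  · intro x _
    exact intervalIntegral.integral_hasDerivAt_right hint.intervalIntegrable
      (hcont.stronglyMeasurableAtFilter _ _) hcont.continuousAt
  · have h1 : Tendsto F atBot (nhds (-∫ t in Set.Iic (0:ℝ), f t)) := by
      have := MeasureTheory.intervalIntegral_tendsto_integral_Iic (0:ℝ)
        hint.integrableOn tendsto_id
      refine (this.neg).congr fun x => ?_
      rw [hF, intervalIntegral.integral_symm, neg_neg]; rfl
    rw [endFilter, eIoo_bot_top, comap_coe_nhds_bot]
    simpa using h1
  · have h1 : Tendsto F atTop (nhds (∫ t in Set.Ioi (0:ℝ), f t)) :=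
      MeasureTheory.intervalIntegral_tendsto_integral_Ioi (0:ℝ)
        hint.integrableOn tendsto_id
    rw [endFilter, eIoo_bot_top, comap_coe_nhds_top]
    simpa using h1
  · have := integral_gaussian 1
    rw [sub_neg_eq_add, add_comm,
      intervalIntegral.integral_Iic_add_Ioi hint.integrableOn hint.integrableOn]
    simp only [neg_mul, one_mul] at this
    rw [this]
    norm_num
end
end
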